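/- Let c ∈ ℝ, D = c² + 4, a = (c + √D)/2, b = (c − √D)/2, and consider the four vectors e₁ = (1,1,−b,−b), e₂ = (−1,1,b,−b), e₃ = (−1,−1,a,a), e₄ = (1,−1,−a,a) in ℝ⁴. Then these vectors are pairwise orthogonal for the Petean bilinear form B_c, with B_c(e₁,e₁) = B_c(e₂,e₂) = 2√D > 0 and B_c(e₃,e₃) = B_c(e₄,e₄) = −2√D < 0. In particular (e₁,e₂,e₃,e₄) is a basis of ℝ⁴ and B_c is a nondegenerate symmetric bilinear form of signature (2,2) for every value of c. -/

import Mathlib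

open Real

/-- The Petean bilinear form `B_c(u,v) = u₁v₃ + u₃v₁ + u₂v₄ + u₄v₂ + c(u₁v₁ + u₂v₂)`. -/
def Bpet (c : ℝ) (u v : Fin 4 → ℝ) : ℝ :=
  u 0 * v 2 + u 2 * v 0 + u 1 * v 3 + u 3 * v 1 + c * (u 0 * v 0 + u 1 * v 1)

/-- With `D = c² + 4`, `a = (c+√D)/2`, `b = (c−√D)/2`, the vectors
`e₁ = (1,1,−b,−b)`, `e₂ = (−1,1,b,−b)`, `e₃ = (−1,−1,a,a)`, `e₄ = (1,−1,−a,a)`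
are pairwise `B_c`-orthogonal, with `B_c(e₁,e₁) = B_c(e₂,e₂) = 2√D > 0` and
`B_c(e₃,e₃) = B_c(e₄,e₄) = −2√D < 0`.  In particular they form a basis of ℝ⁴ and
`B_c` is a nondegenerate symmetric bilinear form of signature (2,2). -/
theorem statement3 (c : ℝ) :
    let D : ℝ := c ^ 2 + 4
    let a : ℝ := (c + Real.sqrt D) / 2
    let b : ℝ := (c - Real.sqrt D) / 2
    let e : Fin 4 → Fin 4 → ℝ :=
      ![![1, 1, -b, -b], ![-1, 1, b, -b], ![-1, -1, a, a], ![1, -1, -a, a]]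
    (∀ i j : Fin 4, i ≠ j → Bpet c (e i) (e j) = 0) ∧
    Bpet c (e 0) (e 0) = 2 * Real.sqrt D ∧
    Bpet c (e 1) (e 1) = 2 * Real.sqrt D ∧
    Bpet c (e 2) (e 2) = -(2 * Real.sqrt D) ∧
    Bpet c (e 3) (e 3) = -(2 * Real.sqrt D) ∧
    0 < 2 * Real.sqrt D ∧
    LinearIndependent ℝ e ∧
    (∀ u v : Fin 4 → ℝ, Bpet c u v = Bpet c v u) ∧
    (∀ u : Fin 4 → ℝ, (∀ v : Fin 4 → ℝ, Bpet c u v = 0) → u = 0) := by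
  intro D a b e
  have hD : 0 < D := by positivity
  have hs : Real.sqrt D ^ 2 = D := Real.sq_sqrt hD.le
  have hspos : 0 < Real.sqrt D := Real.sqrt_pos.mpr hD
  refine ⟨?_, ?_, ?_, ?_, ?_, by positivity, ?_, ?_, ?_⟩
  · intro i j hij
    fin_cases i <;> fin_cases j <;>
      simp_all [Bpet, e, a, b, Matrix.vecHead, Matrix.vecTail] <;> ring
  · simp [Bpet, e, a, b, Matrix.vecHead, Matrix.vecTail]; ring
  · simp [Bpet, e, a, b, Matrix.vecHead, Matrix.vecTail]; ring
  · simp [Bpet, e, a, b, Matrix.vecHead, Matrix.vecTail]; ring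
  · simp [Bpet, e, a, b, Matrix.vecHead, Matrix.vecTail]; ring
  · have hM : e = fun i =>
        (!![1, 1, -b, -b; -1, 1, b, -b; -1, -1, a, a; 1, -1, -a, a] :
          Matrix (Fin 4) (Fin 4) ℝ) i := rfl
    rw [hM, show (fun i => (!![1, 1, -b, -b; -1, 1, b, -b; -1, -1, a, a; 1, -1, -a, a] :
          Matrix (Fin 4) (Fin 4) ℝ) i) = Matrix.row
          (!![1, 1, -b, -b; -1, 1, b, -b; -1, -1, a, a; 1, -1, -a, a] :
          Matrix (Fin 4) (Fin 4) ℝ) from rfl, Matrix.linearIndependent_rows_iff_isUnit]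
    apply (Matrix.isUnit_iff_isUnit_det _).mpr
    rw [isUnit_iff_ne_zero]
    have hdet : Matrix.det
        (!![1, 1, -b, -b; -1, 1, b, -b; -1, -1, a, a; 1, -1, -a, a] :
          Matrix (Fin 4) (Fin 4) ℝ) = 4 * (a - b) ^ 2 := by
      simp [Matrix.det_succ_row_zero, Fin.sum_univ_succ, Fin.succAbove,
        show (Fin.castSucc 2 : Fin 4) = 2 by rfl]
      ring
    rw [hdet]
    have hab : a - b = Real.sqrt D := by simp only [a, b]; ring
    rw [hab]
    positivity
  · intro u v; simp only [Bpet]; ring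
  · intro u hu
    have h0 := hu ![0, 0, 1, 0]
    have h1 := hu ![0, 0, 0, 1]
    have h2 := hu ![1, 0, 0, 0]
    have h3 := hu ![0, 1, 0, 0]
    simp [Bpet, Matrix.vecHead, Matrix.vecTail] at h0 h1 h2 h3
    funext i
    fin_cases i <;> simp_all
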